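/- If {v1, v2} and {v2, v3} are both double-vertex dominators of a vertex u, then either {v1, v2} dominates v3, or {v2, v3} dominates v1. -/

import Mathlib

/-- A nonempty directed path `p` from `a` to `b` in the graph with edge relation `E`. -/
def IsPath {V : Type*} (E : V → V → Prop) (p : List V) (a b : V) : Prop :=
  p ≠ [] ∧ p.head? = some a ∧ p.getLast? = some b ∧ p.Chain' E

/-- `A` dominates `B` with respect to `root`: every path from a vertex of `B` to `root`
contains a vertex of `A`. -/
def Dominates {V : Type*} (E : V → V → Prop) (root : V) (A B : Set V) : Prop :=
  ∀ b ∈ B, ∀ p : List V, IsPath E p b root → ∃ a ∈ A, a ∈ p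

/-- `A` is a dominator of `B`: it dominates `B` and no proper subset `A \ {v}` does. -/
def IsDominator {V : Type*} (E : V → V → Prop) (root : V) (A B : Set V) : Prop :=
  Dominates E root A B ∧ ∀ v ∈ A, ¬ Dominates E root (A \ {v}) B

/-- `{v, w}` is a double-vertex dominator of `u`. -/
def DoubleDom {V : Type*} (E : V → V → Prop) (root : V) (u v w : V) : Prop :=
  v ≠ w ∧ Dominates E root {v, w} {u} ∧
    ¬ Dominates E root {v} {u} ∧ ¬ Dominates E root {w} {u}

/-- The edge relation `E` is acyclic. -/
def Acyclic {V : Type*} (E : V → V → Prop) : Prop :=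
  ∀ a b, E a b → ¬ Relation.ReflTransGen E b a


lemma getLast?_cons_ne {α : Type*} (a : α) {l : List α} (h : l ≠ []) :
    (a :: l).getLast? = l.getLast? := by
  rw [show a :: l = [a] ++ l from rfl, List.getLast?_append_of_ne_nil _ h]

lemma splice {V : Type*} {E : V → V → Prop} {p q : List V} {a m c : V}
    (hp : IsPath E p a m) (hq : IsPath E q m c) :
    IsPath E (p ++ q.tail) a c ∧ ∀ x ∈ p ++ q.tail, x ∈ p ∨ x ∈ q := by
  obtain ⟨hpne, hph, hpl, hpc⟩ := hp
  obtain ⟨hqne, hqh, hql, hqc⟩ := hq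
  have hqcons : m :: q.tail = q := List.cons_head?_tail hqh
  constructor
  · refine ⟨by simp [hpne], ?_, ?_, ?_⟩
    · rw [List.head?_append, hph]; rfl
    · rcases eq_or_ne q.tail [] with h | h
      · have hq1 : q = [m] := by rw [← hqcons, h]
        rw [hq1] at hql
        simp at hql
        simp [h, hpl, hql]
      · rw [List.getLast?_append_of_ne_nil _ h]
        rw [← hqcons, getLast?_cons_ne _ h] at hql
        exact hql
    · rw [List.Chain', List.isChain_append]
      refine ⟨hpc, ?_, ?_⟩
      · rw [← hqcons] at hqc
        exact hqc.tail
      · intro x hx y hy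
        rw [hpl] at hx
        rw [← hqcons] at hqc
        rw [Option.mem_some_iff] at hx
        subst hx
        exact (List.isChain_cons.mp hqc).1 y hy
  · intro x hx
    rcases List.mem_append.mp hx with h | h
    · exact Or.inl h
    · exact Or.inr (by rw [← hqcons]; exact List.mem_cons_of_mem _ h)

lemma reachFirst {V : Type*} {E : V → V → Prop} (S : Set V) :
    ∀ (p : List V) (a b : V), IsPath E p a b → (∃ x ∈ p, x ∈ S) →
      ∃ q m, m ∈ S ∧ IsPath E q a m ∧ (∀ x ∈ q, x ∈ S → x = m) ∧ ∀ x ∈ q, x ∈ p := by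
  intro p
  induction p with
  | nil => intro a b hp _; exact absurd rfl hp.1
  | cons hd t ih =>
    intro a b hp hx
    obtain ⟨hne, hh, hl, hc⟩ := hp
    have ha : a = hd := by simpa using hh.symm
    subst ha
    by_cases hmem : a ∈ S
    · exact ⟨[a], a, hmem, ⟨by simp, rfl, rfl, List.isChain_singleton _⟩,
        by simp, by simp⟩
    · obtain ⟨x, hxp, hxS⟩ := hx
      have hxt : x ∈ t := by
        rcases List.mem_cons.mp hxp with h | h
        · exact absurd (h ▸ hxS) hmem
        · exact h
      have htne : t ≠ [] := List.ne_nil_of_mem hxt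
      obtain ⟨h0, t', rfl⟩ := List.exists_cons_of_ne_nil htne
      have hcc := List.isChain_cons.mp hc
      have hpt : IsPath E (h0 :: t') h0 b := by
        refine ⟨by simp, rfl, ?_, hcc.2⟩
        rw [getLast?_cons_ne a (by simp : (h0 :: t') ≠ [])] at hl
        exact hl
      obtain ⟨q, m, hmS, hq, honly, hsub⟩ := ih h0 b hpt ⟨x, hxt, hxS⟩
      refine ⟨a :: q, m, hmS, ?_, ?_, ?_⟩
      · obtain ⟨hqne, hqh, hql, hqc⟩ := hq
        refine ⟨by simp, rfl, ?_, ?_⟩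
        · rwa [getLast?_cons_ne _ hqne]
        · rw [List.Chain', List.isChain_cons]
          refine ⟨?_, hqc⟩
          intro y hy
          rw [hqh, Option.mem_some_iff] at hy
          subst hy
          exact hcc.1 _ rfl
      · intro x' hx' hx'S
        rcases List.mem_cons.mp hx' with h | h
        · exact absurd (h ▸ hx'S) hmem
        · exact honly x' h hx'S
      · intro x' hx'
        rcases List.mem_cons.mp hx' with h | h
        · simp [h]
        · exact List.mem_cons_of_mem _ (hsub x' h)

theorem doubleDom_common_vertex {V : Type*} [Fintype V] (E : V → V → Prop) (root : V)
    (hacyc : Acyclic E) (u v₁ v₂ v₃ : V)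
    (h12 : DoubleDom E root u v₁ v₂) (h23 : DoubleDom E root u v₂ v₃) :
    Dominates E root {v₁, v₂} {v₃} ∨ Dominates E root {v₂, v₃} {v₁} := by
  obtain ⟨hne12, hdom12, hnd1, hnd2⟩ := h12
  obtain ⟨hne23, hdom23, hnd2', hnd3⟩ := h23
  by_cases h13 : v₁ = v₃
  · left
    intro b hb p hp
    refine ⟨v₁, Or.inl rfl, ?_⟩
    have hb' : b = v₃ := hb
    have : p.head? = some b := hp.2.1
    have hbp : b ∈ p := List.mem_of_mem_head? (by rw [this]; rfl)
    rw [h13, ← hb']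
    exact hbp
  by_contra hcon
  push_neg at hcon
  obtain ⟨hc1, hc2⟩ := hcon
  -- a path from v₃ to root avoiding v₁ and v₂
  have hP : ∃ p, IsPath E p v₃ root ∧ v₁ ∉ p ∧ v₂ ∉ p := by
    simp only [Dominates, not_forall] at hc1
    obtain ⟨b, hb, p, hp, hnp⟩ := hc1
    rw [Set.mem_singleton_iff] at hb
    subst hb
    push_neg at hnp
    exact ⟨p, hp, hnp v₁ (Or.inl rfl), hnp v₂ (Or.inr rfl)⟩
  -- a path from v₁ to root avoiding v₂ and v₃
  have hQ : ∃ p, IsPath E p v₁ root ∧ v₂ ∉ p ∧ v₃ ∉ p := by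
    simp only [Dominates, not_forall] at hc2
    obtain ⟨b, hb, p, hp, hnp⟩ := hc2
    rw [Set.mem_singleton_iff] at hb
    subst hb
    push_neg at hnp
    exact ⟨p, hp, hnp v₂ (Or.inl rfl), hnp v₃ (Or.inr rfl)⟩
  obtain ⟨P, hPp, hPv1, hPv2⟩ := hP
  obtain ⟨Q, hQp, hQv2, hQv3⟩ := hQ
  -- a path R from u to root avoiding v₂
  have hR : ∃ p, IsPath E p u root ∧ v₂ ∉ p := by
    simp only [Dominates, not_forall] at hnd2
    obtain ⟨b, hb, p, hp, hnp⟩ := hnd2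
    rw [Set.mem_singleton_iff] at hb
    subst hb
    push_neg at hnp
    exact ⟨p, hp, hnp v₂ rfl⟩
  obtain ⟨R, hRp, hRv2⟩ := hR
  have hv1R : v₁ ∈ R := by
    obtain ⟨a, ha, haR⟩ := hdom12 u rfl R hRp
    rcases ha with rfl | rfl
    · exact haR
    · exact absurd haR hRv2
  have hv3R : v₃ ∈ R := by
    obtain ⟨a, ha, haR⟩ := hdom23 u rfl R hRp
    rcases ha with rfl | rfl
    · exact absurd haR hRv2
    · exact haR
  obtain ⟨q, m, hmS, hq, honly, hsub⟩ :=
    reachFirst ({v₁, v₃} : Set V) R u root hRp ⟨v₁, hv1R, Or.inl rfl⟩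
  have hqv2 : v₂ ∉ q := fun h => hRv2 (hsub v₂ h)
  rcases hmS with rfl | rfl
  · -- m = v₁ : splice q with Q to get a u→root path avoiding v₂ and v₃
    obtain ⟨hpath, hmem⟩ := splice hq hQp
    obtain ⟨a, ha, haP⟩ := hdom23 u rfl _ hpath
    rcases ha with rfl | rfl
    · rcases hmem a haP with h | h
      · exact hqv2 h
      · exact hQv2 h
    · rcases hmem a haP with h | h
      · exact h13 (honly a h (Or.inr rfl)).symm
      · exact hQv3 h
  · -- m = v₃ : splice q with P to get a u→root path avoiding v₁ and v₂
    obtain ⟨hpath, hmem⟩ := splice hq hPp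
    obtain ⟨a, ha, haP⟩ := hdom12 u rfl _ hpath
    rcases ha with rfl | rfl
    · rcases hmem a haP with h | h
      · exact h13 (honly a h (Or.inl rfl))
      · exact hPv1 h
    · rcases hmem a haP with h | h
      · exact hqv2 h
      · exact hPv2 h
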